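/- arXiv:1801.02292 — 2 statements merged into one kernel-verified Lean document; each statement's English description precedes it below -/
import Mathlib

section
/- In the lower-bound construction, for m−k sites v₁,…,v_{m−k} placed consecutively close on a horizontal segment ℓ₁ ending at o and k sites u₁,…,u_k placed on a segment ℓ₂ starting at o with positive slope, with ‖v_{m−k}−o‖ ≪ ‖u₁−o‖, the following holds: for every κ with 1 ≤ κ ≤ min{k, m−k} and every set of κ consecutive sites v_i,…,v_{i+κ−1} on ℓ₁, there exists a point x (equidistant from v_i, v_{i+κ−1}, u_{k−κ}) whose k nearest sites among all m sites are exactly {v_i,…,v_{i+κ−1}, u₁,…,u_{k−κ}}; hence the order-k Voronoi diagram of the m sites has at least (m−k−κ+1) nonempty cells of this form for each κ, giving Ω(k(m−k)) cells in total. -/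
open Metric Set

noncomputable section

local notation "E" => EuclideanSpace ℝ (Fin 2)

/-- A point of the Euclidean plane with the two given coordinates. -/
noncomputable def pt (a b : ℝ) : EuclideanSpace ℝ (Fin 2) := WithLp.toLp 2 ![a, b]

lemma dist_pt (a b c d : ℝ) :
    dist (pt a b) (pt c d) = Real.sqrt ((a - c)^2 + (b - d)^2) := by
  rw [EuclideanSpace.dist_eq]
  simp [Fin.sum_univ_two, pt, Real.dist_eq, sq_abs]

lemma dist_pt_lt (x0 x1 a0 a1 b0 b1 : ℝ)
    (h : (x0-a0)^2+(x1-a1)^2 < (x0-b0)^2+(x1-b1)^2) :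
    dist (pt x0 x1) (pt a0 a1) < dist (pt x0 x1) (pt b0 b1) := by
  rw [dist_pt, dist_pt]
  exact Real.sqrt_lt_sqrt (by positivity) h

lemma dist_pt_eq (x0 x1 a0 a1 b0 b1 : ℝ)
    (h : (x0-a0)^2+(x1-a1)^2 = (x0-b0)^2+(x1-b1)^2) :
    dist (pt x0 x1) (pt a0 a1) = dist (pt x0 x1) (pt b0 b1) := by
  rw [dist_pt, dist_pt, h]

/-- The sites on the horizontal segment. -/
noncomputable def vpt (j : ℕ) : EuclideanSpace ℝ (Fin 2) := pt (-(j:ℝ)) 0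

/-- The sites on the diagonal ray, offset by `R`. -/
noncomputable def upt (R : ℝ) (j : ℕ) : EuclideanSpace ℝ (Fin 2) :=
  pt (R + (j:ℝ)) (R + (j:ℝ))

set_option maxHeartbeats 1000000 in
/-- Lower-bound construction for the order-`k` Voronoi diagram in the Euclidean
plane. There exist a point `o`, sites `v 1, …, v (m-k)` on a horizontal segment
ending at `o` (left of `o`, ordered by increasing distance from `o`) and sites
`u 1, …, u k` on a ray from `o` of positive slope (ordered by increasing distance
from `o`), with `‖v (m-k) - o‖ < ‖u 1 - o‖`, such that: for every `κ` with
`1 ≤ κ ≤ min k (m-k)` and every window of `κ` consecutive sites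
`v i, …, v (i+κ-1)`, there is a point `x` (equidistant from `v i`, `v (i+κ-1)` and
`u (k-κ)`) whose `k` nearest sites among all `m` sites are exactly
`{v i, …, v (i+κ-1)} ∪ {u 1, …, u (k-κ)}`; moreover, for each `κ` these defining
`k`-sets are pairwise distinct over the `m-k-κ+1` admissible windows, so the
order-`k` Voronoi diagram has at least `m-k-κ+1` nonempty cells of this form for
each `κ`, i.e. `Ω(k(m-k))` cells in total. -/
theorem order_k_voronoi_lower_bound_construction (m k : ℕ) (hk : 1 ≤ k) (hkm : k < m) :
    ∃ (o : E) (v u : ℕ → E),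
      -- the sites v 1, …, v (m-k) lie on a horizontal segment left of o
      (∀ i, 1 ≤ i → i ≤ m - k → (v i) 1 = o 1 ∧ (v i) 0 < o 0) ∧
      -- ordered by increasing distance from o along ℓ₁
      (∀ i j, 1 ≤ i → i < j → j ≤ m - k → dist (v i) o < dist (v j) o) ∧
      -- the sites u 1, …, u k lie on a ray from o with positive slope
      (∃ w : E, 0 < w 0 ∧ 0 < w 1 ∧
        ∀ j, 1 ≤ j → j ≤ k → ∃ r : ℝ, 0 < r ∧ u j = o + r • w) ∧
      -- ordered by increasing distance from o along ℓ₂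
      (∀ i j, 1 ≤ i → i < j → j ≤ k → dist (u i) o < dist (u j) o) ∧
      -- ‖v_{m-k} − o‖ ≪ ‖u₁ − o‖
      dist (v (m - k)) o < dist (u 1) o ∧
      -- main claim: each window yields a nonempty order-k cell
      (∀ κ, 1 ≤ κ → κ ≤ min k (m - k) → ∀ i, 1 ≤ i → i + κ - 1 ≤ m - k →
        ∃ x : E,
          dist x (v i) = dist x (v (i + κ - 1)) ∧
          (1 ≤ k - κ → dist x (v i) = dist x (u (k - κ))) ∧
          (∀ a ∈ (v '' Set.Icc i (i + κ - 1)) ∪ (u '' Set.Icc 1 (k - κ)),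
            ∀ b ∈ (v '' Set.Icc 1 (m - k)) ∪ (u '' Set.Icc 1 k),
              b ∉ (v '' Set.Icc i (i + κ - 1)) ∪ (u '' Set.Icc 1 (k - κ)) →
                dist x a < dist x b)) ∧
      -- hence at least m-k-κ+1 distinct cells of this form for each κ
      (∀ κ, 1 ≤ κ → κ ≤ min k (m - k) →
        Set.InjOn
          (fun i => ((v '' Set.Icc i (i + κ - 1)) ∪ (u '' Set.Icc 1 (k - κ)) : Set E))
          (Set.Icc 1 (m - k - κ + 1))) := by
  classical
  obtain ⟨R, hRdef⟩ : ∃ R : ℝ, R = ((m:ℝ)+(k:ℝ))^2 + (m:ℝ) + (k:ℝ) + 10 := ⟨_, rfl⟩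
  have hm1 : (1:ℝ) ≤ (m:ℝ) := by exact_mod_cast Nat.one_le_cast.2 (by omega)
  have hk1 : (1:ℝ) ≤ (k:ℝ) := by exact_mod_cast hk
  have hRm : (m:ℝ)^2 ≤ R := by rw [hRdef]; nlinarith [sq_nonneg (k:ℝ)]
  have hRbig : (m:ℝ) + (k:ℝ) + 10 ≤ R := by rw [hRdef]; nlinarith [sq_nonneg ((m:ℝ)+(k:ℝ))]
  have hR0 : 0 < R := by nlinarith
  refine ⟨pt 0 0, vpt, upt R, ?_, ?_, ?_, ?_, ?_, ?_, ?_⟩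
  · -- horizontal segment left of o
    intro i h1 _h2
    refine ⟨rfl, ?_⟩
    show -(i:ℝ) < 0
    have : (1:ℝ) ≤ (i:ℝ) := by exact_mod_cast h1
    linarith
  · -- v ordered
    intro i j _h1 h2 _h3
    show dist (pt (-(i:ℝ)) 0) (pt 0 0) < dist (pt (-(j:ℝ)) 0) (pt 0 0)
    rw [dist_comm (pt (-(i:ℝ)) 0), dist_comm (pt (-(j:ℝ)) 0)]
    apply dist_pt_lt
    have hij : (i:ℝ) < (j:ℝ) := by exact_mod_cast h2
    have h0 : (0:ℝ) ≤ (i:ℝ) := Nat.cast_nonneg i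
    nlinarith
  · -- ray with positive slope
    refine ⟨pt 1 1, ?_, ?_, fun j _hj1 _hjk => ⟨R + (j:ℝ), ?_, ?_⟩⟩
    · show (0:ℝ) < 1; norm_num
    · show (0:ℝ) < 1; norm_num
    · have : (0:ℝ) ≤ (j:ℝ) := Nat.cast_nonneg j
      linarith
    · show pt (R + (j:ℝ)) (R + (j:ℝ)) = pt 0 0 + (R + (j:ℝ)) • pt 1 1
      ext t; fin_cases t <;>
        simp [pt, PiLp.add_apply, PiLp.smul_apply]
  · -- u ordered
    intro i j _h1 h2 _h3
    show dist (pt (R + (i:ℝ)) (R + (i:ℝ))) (pt 0 0)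
        < dist (pt (R + (j:ℝ)) (R + (j:ℝ))) (pt 0 0)
    rw [dist_comm (pt (R + (i:ℝ)) (R + (i:ℝ))), dist_comm (pt (R + (j:ℝ)) (R + (j:ℝ)))]
    apply dist_pt_lt
    have hij : (i:ℝ) < (j:ℝ) := by exact_mod_cast h2
    have h0 : (0:ℝ) ≤ (i:ℝ) := Nat.cast_nonneg i
    nlinarith
  · -- v (m-k) closer to o than u 1
    show dist (pt (-((m-k:ℕ):ℝ)) 0) (pt 0 0) < dist (pt (R + ((1:ℕ):ℝ)) (R + ((1:ℕ):ℝ))) (pt 0 0)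
    rw [dist_comm (pt (-((m-k:ℕ):ℝ)) 0), dist_comm (pt (R + ((1:ℕ):ℝ)) (R + ((1:ℕ):ℝ)))]
    apply dist_pt_lt
    have hc : ((m-k:ℕ):ℝ) ≤ (m:ℝ) := Nat.cast_le.2 (by omega)
    have hc0 : (0:ℝ) ≤ ((m-k:ℕ):ℝ) := Nat.cast_nonneg _
    have h1 : ((1:ℕ):ℝ) = 1 := Nat.cast_one
    rw [h1]
    nlinarith [hRbig]
  · -- main claim
    intro κ hκ1 hκ2 i hi1 hi2
    have hκk : κ ≤ k := le_trans hκ2 (min_le_left _ _)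
    have hκm : κ ≤ m - k := le_trans hκ2 (min_le_right _ _)
    obtain ⟨C, hC⟩ : ∃ C : ℝ, C = ((κ:ℝ)-1)/2 := ⟨_, rfl⟩
    obtain ⟨I, hI⟩ : ∃ I : ℝ, I = (i:ℝ) := ⟨_, rfl⟩
    obtain ⟨x0, hx0⟩ : ∃ x : ℝ, x = -(I + C) := ⟨_, rfl⟩
    obtain ⟨r, hr⟩ : ∃ r : ℝ, r = R + ((k - κ : ℕ):ℝ) := ⟨_, rfl⟩
    obtain ⟨y, hy⟩ : ∃ y : ℝ, y = (2*r^2 - 2*r*x0 + x0^2 - C^2) / (2*r) := ⟨_, rfl⟩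
    have hC0 : 0 ≤ C := by
      rw [hC]; have : (1:ℝ) ≤ (κ:ℝ) := by exact_mod_cast hκ1
      linarith
    have hI1 : 1 ≤ I := by rw [hI]; exact_mod_cast hi1
    have hwcast : ((i + κ - 1 : ℕ):ℝ) = I + 2*C := by
      rw [hI, hC, Nat.cast_sub (show 1 ≤ i + κ by omega)]
      push_cast; ring
    have hIC : I + 2*C ≤ (m:ℝ) := by
      have h1 : ((i + κ - 1 : ℕ):ℝ) ≤ ((m - k : ℕ):ℝ) := Nat.cast_le.2 hi2
      have h2 : ((m - k:ℕ):ℝ) ≤ (m:ℝ) := Nat.cast_le.2 (by omega)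
      rw [hwcast] at h1; linarith
    have hx0sq : x0^2 ≤ R := by rw [hx0]; nlinarith [hRm]
    have hrR : R ≤ r := by
      rw [hr]; have : (0:ℝ) ≤ ((k-κ:ℕ):ℝ) := Nat.cast_nonneg _; linarith
    have hrk : r ≤ R + (k:ℝ) := by
      rw [hr]; have : ((k-κ:ℕ):ℝ) ≤ (k:ℝ) := Nat.cast_le.2 (by omega); linarith
    have hr0 : 0 < r := lt_of_lt_of_le hR0 hrR
    have h2ry : 2*r*y = 2*r^2 - 2*r*x0 + x0^2 - C^2 := by
      rw [hy]; field_simp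
    have hid : 2*r^2 - 2*r*(x0+y) + x0^2 = C^2 := by linear_combination -h2ry
    have hs : x0 + y ≤ R + (k:ℝ) + 1 := by
      have h1 : 2*r*(x0+y) ≤ 2*r*(R+(k:ℝ)+1) := by
        nlinarith [mul_nonneg (sub_nonneg.2 hrk) hr0.le, sq_nonneg C]
      exact le_of_mul_le_mul_left h1 (by linarith)
    have hu_out : ∀ ρ : ℝ, r + 1 ≤ ρ → C^2 + y^2 < (x0 - ρ)^2 + (y - ρ)^2 := by
      intro ρ hρ
      have h2 : 1 ≤ ρ - r := by linarith
      have h3 : 1 ≤ ρ + r - (x0 + y) := by linarith [hs, hrR, hRbig, hm1]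
      nlinarith [mul_le_mul h2 h3 (by linarith) (by linarith), hid]
    have hu_in : ∀ ρ : ℝ, R ≤ ρ → ρ ≤ r → (x0 - ρ)^2 + (y - ρ)^2 ≤ C^2 + y^2 := by
      intro ρ h1 h2
      have h3 : 0 ≤ ρ + r - (x0+y) := by linarith [hs, hrR, hRbig, hm1]
      nlinarith [mul_nonneg (sub_nonneg.2 h2) h3, hid]
    have hv_in : ∀ J : ℝ, I ≤ J → J ≤ I + 2*C → (x0 + J)^2 ≤ C^2 := by
      intro J h1 h2
      have e1 : 0 ≤ x0 + J + C := by rw [hx0]; linarith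
      have e2 : 0 ≤ C - (x0 + J) := by rw [hx0]; linarith
      nlinarith [mul_nonneg e1 e2]
    have hv_out1 : ∀ J : ℝ, J ≤ I - 1 → C^2 < (x0+J)^2 := by
      intro J h1
      have e : x0 + J ≤ -(C+1) := by rw [hx0]; linarith
      nlinarith [hC0, mul_nonneg hC0 (show (0:ℝ) ≤ -(C+1) - (x0+J) by linarith)]
    have hv_out2 : ∀ J : ℝ, I + 2*C + 1 ≤ J → C^2 < (x0+J)^2 := by
      intro J h1
      have e : C + 1 ≤ x0 + J := by rw [hx0]; linarith
      nlinarith [hC0, mul_nonneg hC0 (show (0:ℝ) ≤ (x0+J) - (C+1) by linarith)]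
    refine ⟨pt x0 y, ?_, ?_, ?_⟩
    · -- equidistant from the two window ends
      show dist (pt x0 y) (pt (-((i:ℕ):ℝ)) 0) = dist (pt x0 y) (pt (-((i+κ-1:ℕ):ℝ)) 0)
      apply dist_pt_eq
      rw [hwcast, ← hI, hx0]
      ring
    · -- equidistant from u (k-κ)
      intro _hq
      show dist (pt x0 y) (pt (-((i:ℕ):ℝ)) 0)
          = dist (pt x0 y) (pt (R + ((k-κ:ℕ):ℝ)) (R + ((k-κ:ℕ):ℝ)))
      apply dist_pt_eq
      rw [← hI, ← hr]
      have hx0I : x0 + I = -C := by rw [hx0]; ring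
      linear_combination (x0 + I - C) * hx0I - hid
    · -- nearest-site property
      intro a ha b hb hbn
      have hA : dist (pt x0 y) a ≤ Real.sqrt (C^2 + y^2) := by
        rcases ha with ⟨j, hj, rfl⟩ | ⟨j, hj, rfl⟩
        · show dist (pt x0 y) (pt (-(j:ℝ)) 0) ≤ _
          rw [dist_pt]
          apply Real.sqrt_le_sqrt
          have c1 : I ≤ (j:ℝ) := by rw [hI]; exact_mod_cast hj.1
          have c2 : (j:ℝ) ≤ I + 2*C := by rw [← hwcast]; exact_mod_cast hj.2
          nlinarith [hv_in (j:ℝ) c1 c2]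
        · show dist (pt x0 y) (pt (R + (j:ℝ)) (R + (j:ℝ))) ≤ _
          rw [dist_pt]
          apply Real.sqrt_le_sqrt
          have c1 : R ≤ R + (j:ℝ) := by
            have : (0:ℝ) ≤ (j:ℝ) := Nat.cast_nonneg _; linarith
          have c2 : R + (j:ℝ) ≤ r := by
            rw [hr]
            have : (j:ℝ) ≤ ((k-κ:ℕ):ℝ) := Nat.cast_le.2 hj.2
            linarith
          exact hu_in (R + (j:ℝ)) c1 c2
      have hB : Real.sqrt (C^2 + y^2) < dist (pt x0 y) b := by
        rcases hb with ⟨j, hj, rfl⟩ | ⟨j, hj, rfl⟩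
        · have hnot : ¬ (i ≤ j ∧ j ≤ i + κ - 1) := by
            intro h'
            exact hbn (Set.mem_union_left _ ⟨j, h', rfl⟩)
          show Real.sqrt _ < dist (pt x0 y) (pt (-(j:ℝ)) 0)
          rw [dist_pt]
          apply Real.sqrt_lt_sqrt (by positivity)
          have hj1 := hj.1
          have hj2 := hj.2
          rcases (show j + 1 ≤ i ∨ i + κ ≤ j by omega) with h' | h'
          · have c : (j:ℝ) ≤ I - 1 := by
              rw [hI]
              have : (j:ℝ) + 1 ≤ (i:ℝ) := by exact_mod_cast h'
              linarith
            linarith [hv_out1 (j:ℝ) c]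
          · have c : I + 2*C + 1 ≤ (j:ℝ) := by
              have : ((i+κ-1:ℕ):ℝ) + 1 ≤ (j:ℝ) := by
                exact_mod_cast (show i + κ - 1 + 1 ≤ j by omega)
              rw [hwcast] at this
              linarith
            linarith [hv_out2 (j:ℝ) c]
        · have hout : k - κ + 1 ≤ j := by
            by_contra h'
            exact hbn (Set.mem_union_right _ ⟨j, ⟨hj.1, by omega⟩, rfl⟩)
          show Real.sqrt _ < dist (pt x0 y) (pt (R + (j:ℝ)) (R + (j:ℝ)))
          rw [dist_pt]
          apply Real.sqrt_lt_sqrt (by positivity)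
          have c : r + 1 ≤ R + (j:ℝ) := by
            rw [hr]
            have : ((k-κ:ℕ):ℝ) + 1 ≤ (j:ℝ) := by exact_mod_cast hout
            linarith
          exact hu_out (R + (j:ℝ)) c
      exact hA.trans_lt hB
  · -- injectivity over windows
    intro κ hκ1 _hκ2
    have aux : ∀ j1 j2 : ℕ,
        ((vpt '' Set.Icc j1 (j1+κ-1)) ∪ (upt R '' Set.Icc 1 (k-κ)) : Set E)
          = (vpt '' Set.Icc j2 (j2+κ-1)) ∪ (upt R '' Set.Icc 1 (k-κ)) → j2 ≤ j1 := by
      intro j1 j2 hje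
      have hmem : vpt j1 ∈ ((vpt '' Set.Icc j1 (j1+κ-1)) ∪ (upt R '' Set.Icc 1 (k-κ)) : Set E) :=
        Set.mem_union_left _ ⟨j1, ⟨le_refl _, by omega⟩, rfl⟩
      rw [hje] at hmem
      rcases hmem with ⟨j, hj, hjeq⟩ | ⟨j, _hj, hjeq⟩
      · have h0 : -(j:ℝ) = -(j1:ℝ) := congrArg (fun p : E => p 0) hjeq
        have hjj : j = j1 := by exact_mod_cast neg_inj.1 h0
        have := hj.1
        omega
      · have h0 : R + (j:ℝ) = -(j1:ℝ) := congrArg (fun p : E => p 0) hjeq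
        have n1 : (0:ℝ) ≤ (j:ℝ) := Nat.cast_nonneg _
        have n2 : (0:ℝ) ≤ (j1:ℝ) := Nat.cast_nonneg _
        linarith
    intro i1 _h1 i2 _h2 heq
    exact le_antisymm (aux i2 i1 heq.symm) (aux i1 i2 heq)

end
end

section
/- For a finite set S of m sites in a metric space and 1 ≤ k ≤ m−1, if two order-k Voronoi cells V₁ (of k-set S_k) and V₂ (of k-set S_k') are adjacent (their closures share a boundary point p that is equidistant from some s ∈ S_k \ S_k' and s' ∈ S_k' \ S_k and where the k nearest-site sets switch), then |S_k ∩ S_k'| = k − 1, i.e., adjacent order-k cells share exactly k−1 sites. -/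
open Metric Set

/-- For a finite set `S` of `m` sites in a metric space and `1 ≤ k ≤ m-1`, if the
order-`k` Voronoi cells of the `k`-sets `Sk` and `Sk'` are adjacent — their closures
share a boundary point `p` equidistant from some `s ∈ Sk \ Sk'` and
`s' ∈ Sk' \ Sk`, where only the pair `(s, s')` is equidistant (general position) —
then `|Sk ∩ Sk'| = k - 1`: adjacent order-`k` cells share exactly `k-1` sites. -/
theorem adjacent_order_k_cells_share_k_sub_one_sites {X : Type*} [MetricSpace X] [DecidableEq X]
    (S Sk Sk' : Finset X) (k : ℕ) (hk : 1 ≤ k) (hkm : k ≤ S.card - 1)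
    (hSkS : Sk ⊆ S) (hSk'S : Sk' ⊆ S)
    (hck : Sk.card = k) (hck' : Sk'.card = k) (hne : Sk ≠ Sk')
    (p s s' : X)
    (hs : s ∈ Sk ∧ s ∉ Sk') (hs' : s' ∈ Sk' ∧ s' ∉ Sk)
    (heq : dist p s = dist p s')
    (hgen : ∀ a ∈ S, ∀ b ∈ S, a ≠ b → dist p a = dist p b →
      (a = s ∧ b = s') ∨ (a = s' ∧ b = s))
    (hp1 : p ∈ closure {x : X | ∀ t ∈ Sk, ∀ r ∈ S, r ∉ Sk → dist x t < dist x r})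
    (hp2 : p ∈ closure {x : X | ∀ t ∈ Sk', ∀ r ∈ S, r ∉ Sk' → dist x t < dist x r}) :
    (Sk ∩ Sk').card = k - 1 := by
  have key : ∀ (T : Finset X), T ⊆ S →
      p ∈ closure {x : X | ∀ t ∈ T, ∀ r ∈ S, r ∉ T → dist x t < dist x r} →
      ∀ t ∈ T, ∀ r ∈ S, r ∉ T → dist p t ≤ dist p r := by
    intro T hTS hp t ht r hr hrn
    have hc : IsClosed {x : X | dist x t ≤ dist x r} :=
      isClosed_le (continuous_id.dist continuous_const) (continuous_id.dist continuous_const)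
    have hsub : {x : X | ∀ t ∈ T, ∀ r ∈ S, r ∉ T → dist x t < dist x r} ⊆
        {x : X | dist x t ≤ dist x r} := fun x hx => le_of_lt (hx t ht r hr hrn)
    exact hc.closure_subset (closure_mono hsub hp)
  have h1 := key Sk hSkS hp1
  have h2 := key Sk' hSk'S hp2
  have hdiff : Sk \ Sk' = {s} := by
    apply Finset.eq_singleton_iff_unique_mem.mpr
    refine ⟨Finset.mem_sdiff.mpr ⟨hs.1, hs.2⟩, ?_⟩
    intro t ht
    rw [Finset.mem_sdiff] at ht
    have hts : t ∈ S := hSkS ht.1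
    have hle1 : dist p t ≤ dist p s' := h1 t ht.1 s' (hSk'S hs'.1) hs'.2
    have hle2 : dist p s' ≤ dist p t := h2 s' hs'.1 t hts ht.2
    have hts' : t ≠ s' := fun h => hs'.2 (h ▸ ht.1)
    rcases hgen t hts s' (hSk'S hs'.1) hts' (le_antisymm hle1 hle2) with ⟨h, _⟩ | ⟨h, _⟩
    · exact h
    · exact absurd h hts'
  have hcd : (Sk ∩ Sk').card + (Sk \ Sk').card = Sk.card := Finset.card_inter_add_card_sdiff Sk Sk'
  rw [hdiff, Finset.card_singleton, hck] at hcd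
  omega
end
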